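/- For all integers m ≥ 3 and 0 ≤ a ≤ 2m, the code VT_a(m) corrects all error patterns in E_m(1); that is, for any x₁ ≠ x₂ ∈ VT_a(m) and any deletable error patterns g₁, g₂ of length m each containing at most one error, F_{g₁}(x₁) ≠ F_{g₂}(x₂). -/

import Mathlib

/-- The three kinds of deletable errors: deletion, erasure, substitution (flip). -/
inductive ErrKind : Type
  | D
  | E
  | F
  deriving DecidableEq

instance : Fintype ErrKind where
  elems := {ErrKind.D, ErrKind.E, ErrKind.F}
  complete := by intro x; cases x <;> simp

/-- A binary word of length `n`. -/
abbrev Word (n : ℕ) := Fin n → Bool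

/-- A deletable error pattern of length `n`: a pair `(e, v)`. -/
abbrev Pattern (n : ℕ) := (Fin n → Bool) × (Fin n → ErrKind)

/-- Process a list of (bit, error indicator, error kind) triples in order,
producing the corrupted string over `{0, 1, ε}` (`none` is the erasure symbol). -/
def corruptAux : List (Bool × Bool × ErrKind) → List (Option Bool)
  | [] => []
  | (xi, false, _) :: rest => some xi :: corruptAux rest
  | (_, true, ErrKind.D) :: rest => corruptAux rest
  | (_, true, ErrKind.E) :: rest => none :: corruptAux rest
  | (xi, true, ErrKind.F) :: rest => some (!xi) :: corruptAux rest

/-- The corruption `F_g(x)` of the word `x` by the pattern `g`. -/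
def corrupt {n : ℕ} (g : Pattern n) (x : Word n) : List (Option Bool) :=
  corruptAux (List.ofFn fun i => (x i, g.1 i, g.2 i))

/-- The corruption `F_g(x, t)` of the first `t` bits of `x` by the first `t` entries of `g`. -/
def corruptPrefix {n : ℕ} (g : Pattern n) (x : Word n) (t : ℕ) : List (Option Bool) :=
  corruptAux ((List.ofFn fun i => (x i, g.1 i, g.2 i)).take t)

/-- The number of errors `Σ_i e_i` of a pattern. -/
def errCount {n : ℕ} (g : Pattern n) : ℕ :=
  (Finset.univ.filter fun i => g.1 i = true).card

/-- `E_n(r)`: the set of `n`-length deletable error patterns with at most `r` errors. -/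
def Epat (n r : ℕ) : Finset (Pattern n) :=
  Finset.univ.filter fun g => errCount g ≤ r

/-- A pattern is `P`-far if any two distinct error positions are at distance at least `P`. -/
def IsPFar {n : ℕ} (P : ℕ) (g : Pattern n) : Prop :=
  ∀ i j : Fin n, i ≠ j → g.1 i = true → g.1 j = true →
    (P : ℤ) ≤ |((i : ℕ) : ℤ) - ((j : ℕ) : ℤ)|

/-- The code `C` corrects all error patterns in `F`. -/
def CorrectsIn {n : ℕ} (C : Finset (Word n)) (F : Set (Pattern n)) : Prop :=
  ∀ x₁ ∈ C, ∀ x₂ ∈ C, x₁ ≠ x₂ → ∀ g₁ ∈ F, ∀ g₂ ∈ F, corrupt g₁ x₁ ≠ corrupt g₂ x₂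

/-- The code `C` corrects all error patterns in `F` in real-time with delay at most `d`. -/
def CorrectsRealTime {n : ℕ} (C : Finset (Word n)) (F : Set (Pattern n)) (d : ℕ) : Prop :=
  ∀ z : ℕ, 1 ≤ z → z ≤ n - d → ∀ x₁ ∈ C, ∀ x₂ ∈ C, x₁ ≠ x₂ →
    ∀ g₁ ∈ F, ∀ g₂ ∈ F, corruptPrefix g₁ x₁ (z + d) ≠ corruptPrefix g₂ x₂ (z + d)

/-- The redundancy `R(C) = n - log₂ #C` of an `n`-length code `C`. -/
noncomputable def redundancy {n : ℕ} (C : Finset (Word n)) : ℝ :=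
  (n : ℝ) - Real.logb 2 (C.card)

/-- The modified Varshamov–Tenengolts code
`VT_a(m) = {x ∈ {0,1}^m : Σ_{i=1}^m i·x_i ≡ a (mod 2m+1)}`. -/
def VTcode (a m : ℕ) : Finset (Fin m → Bool) :=
  Finset.univ.filter fun x =>
    (∑ i : Fin m, ((i : ℕ) + 1) * (if x i then 1 else 0)) % (2 * m + 1) = a % (2 * m + 1)

def outFn (t : Bool × Bool × ErrKind) : Option Bool :=
  if t.2.1 then (if t.2.2 = ErrKind.E then none else some (!t.1)) else some t.1

lemma corruptAux_noD (l : List (Bool × Bool × ErrKind))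
    (h : ∀ t ∈ l, t.2.1 = true → t.2.2 ≠ ErrKind.D) :
    corruptAux l = l.map outFn := by
  induction l with
  | nil => rfl
  | cons hd tl ih =>
    obtain ⟨b, e, k⟩ := hd
    have htl : ∀ t ∈ tl, t.2.1 = true → t.2.2 ≠ ErrKind.D := fun t ht => h t (List.mem_cons_of_mem _ ht)
    cases e with
    | false => simp [corruptAux, ih htl, outFn]
    | true =>
      have hk : k ≠ ErrKind.D := h (b, true, k) List.mem_cons_self rfl
      cases k with
      | D => exact absurd rfl hk
      | E => simp [corruptAux, ih htl, outFn]
      | F => simp [corruptAux, ih htl, outFn]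

lemma corruptAux_append (l₁ l₂ : List (Bool × Bool × ErrKind)) :
    corruptAux (l₁ ++ l₂) = corruptAux l₁ ++ corruptAux l₂ := by
  induction l₁ with
  | nil => rfl
  | cons hd tl ih =>
    obtain ⟨b, e, k⟩ := hd
    cases e with
    | false => simp [corruptAux, ih]
    | true => cases k <;> simp [corruptAux, ih]

lemma getElem_idx_congr {α : Type*} (l : List α) {i j : ℕ} (h : i = j) (hi : i < l.length) :
    l[i] = l[j]'(h ▸ hi) := by subst h; rfl

/-- corrupt of a pattern with no deletion errors, as an ofFn list -/
lemma corrupt_noD {m : ℕ} (g : Pattern m) (x : Word m)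
    (h : ∀ i, g.1 i = true → g.2 i ≠ ErrKind.D) :
    corrupt g x = List.ofFn (fun i => outFn (x i, g.1 i, g.2 i)) := by
  unfold corrupt
  rw [corruptAux_noD, List.map_ofFn]
  · rfl
  · intro t ht hte
    rw [List.mem_ofFn] at ht
    obtain ⟨i, rfl⟩ := ht
    exact h i hte

/-- corrupt of a pattern whose unique error is a deletion at p -/
lemma corrupt_del {m : ℕ} (g : Pattern m) (x : Word m) (p : Fin m)
    (hp : g.1 p = true) (hD : g.2 p = ErrKind.D) (huniq : ∀ i, g.1 i = true → i = p) :
    corrupt g x = (List.ofFn fun i => some (x i)).eraseIdx (p : ℕ) := by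
  unfold corrupt
  set L : List (Bool × Bool × ErrKind) := List.ofFn fun i => (x i, g.1 i, g.2 i) with hL
  have hlen : L.length = m := by simp [hL]
  have hplt : (p : ℕ) < L.length := by rw [hlen]; exact p.isLt
  have hfalse : ∀ (j : ℕ) (hj : j < m), j ≠ (p : ℕ) → g.1 ⟨j, hj⟩ = false := by
    intro j hj hne
    by_contra hb
    have : (⟨j, hj⟩ : Fin m) = p := huniq _ (by simpa using hb)
    exact hne (by simpa using congrArg Fin.val this)
  have hsplit : L = L.take (p : ℕ) ++ ((x p, true, ErrKind.D) :: L.drop ((p : ℕ) + 1)) := by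
    conv_lhs => rw [← List.take_append_drop (p : ℕ) L]
    congr 1
    rw [List.drop_eq_getElem_cons hplt]
    congr 1
    simp [hL, List.getElem_ofFn, hp, hD]
  have hnoerr : ∀ (l : List (Bool × Bool × ErrKind)), (∀ t ∈ l, t.2.1 = false) →
      corruptAux l = l.map (fun t => some t.1) := by
    intro l hl
    rw [corruptAux_noD l (fun t ht h1 => by rw [hl t ht] at h1; exact absurd h1 (by simp))]
    refine List.map_congr_left ?_
    intro t ht
    simp [outFn, hl t ht]
  have htake : ∀ t ∈ L.take (p : ℕ), t.2.1 = false := by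
    intro t ht
    obtain ⟨j, hj, rfl⟩ := List.mem_iff_getElem.mp ht
    have hj' : j < (p : ℕ) := by
      have := hj; rw [List.length_take] at this; omega
    have hjm : j < m := by omega
    simp only [List.getElem_take, hL, List.getElem_ofFn]
    exact hfalse j (by omega) (by omega)
  have hdrop : ∀ t ∈ L.drop ((p : ℕ) + 1), t.2.1 = false := by
    intro t ht
    obtain ⟨j, hj, rfl⟩ := List.mem_iff_getElem.mp ht
    have hj' : (p : ℕ) + 1 + j < m := by
      have := hj; rw [List.length_drop, hlen] at this; omega
    simp only [List.getElem_drop, hL, List.getElem_ofFn]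
    exact hfalse _ (by omega) (by omega)
  calc corruptAux L = corruptAux (L.take (p : ℕ)) ++ corruptAux ((x p, true, ErrKind.D) :: L.drop ((p:ℕ)+1)) := by
        rw [← corruptAux_append, ← hsplit]
    _ = (L.take (p:ℕ)).map (fun t => some t.1) ++ (L.drop ((p:ℕ)+1)).map (fun t => some t.1) := by
        rw [hnoerr _ htake, show corruptAux ((x p, true, ErrKind.D) :: L.drop ((p:ℕ)+1)) = corruptAux (L.drop ((p:ℕ)+1)) from rfl, hnoerr _ hdrop]
    _ = (List.ofFn fun i => some (x i)).eraseIdx (p : ℕ) := by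
        have hmap : L.map (fun t => some t.1) = List.ofFn fun i => some (x i) := by
          rw [hL, List.map_ofFn]; rfl
        rw [List.eraseIdx_eq_take_drop_succ, List.map_take, List.map_drop, hmap]

/-- getElem of the erased ofFn list -/
lemma getElem_erase_ofFn {m : ℕ} (x : Fin m → Bool) (p j : ℕ) (hp : p < m) (hj : j < m - 1) :
    ((List.ofFn fun i => some (x i)).eraseIdx p)[j]'(by
        rw [List.length_eraseIdx]; simp only [List.length_ofFn]; split <;> omega) =
      if h : j < p then some (x ⟨j, by omega⟩) else some (x ⟨j + 1, by omega⟩) := by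
  rw [List.getElem_of_eq (List.eraseIdx_eq_take_drop_succ _ _)]
  by_cases h : j < p
  · rw [dif_pos h]
    rw [List.getElem_append_left (by rw [List.length_take, List.length_ofFn]; omega)]
    simp only [List.getElem_take, List.getElem_ofFn]
  · rw [dif_neg h]
    rw [List.getElem_append_right (by rw [List.length_take, List.length_ofFn]; omega)]
    simp only [List.getElem_drop]
    have hidx : (p + 1) + (j - ((List.ofFn fun i => some (x i)).take p).length) = j + 1 := by
      rw [List.length_take, List.length_ofFn]; omega
    rw [getElem_idx_congr _ hidx, List.getElem_ofFn]

lemma not_dvd_helper (m : ℕ) (z : ℤ) (h0 : z ≠ 0) (h2 : -(2 * (m : ℤ)) ≤ z) (h3 : z ≤ 2 * m)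
    (hd : ((2 * m + 1 : ℕ) : ℤ) ∣ z) : False := by
  have h1 : (0 : ℤ) < |z| := abs_pos.mpr h0
  have hle : ((2 * m + 1 : ℕ) : ℤ) ≤ |z| := Int.le_of_dvd h1 ((dvd_abs _ _).mpr hd)
  have habs : |z| ≤ 2 * m := abs_le.mpr ⟨h2, h3⟩
  push_cast at hle
  linarith

lemma eq_zero_helper (m : ℕ) (z : ℤ) (h2 : -(2 * (m : ℤ)) ≤ z) (h3 : z ≤ 2 * m)
    (hd : ((2 * m + 1 : ℕ) : ℤ) ∣ z) : z = 0 := by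
  by_contra h0
  exact not_dvd_helper m z h0 h2 h3 hd

/-- the `ℤ`-valued VT checksum of `x`, with the divisibility fact -/
lemma vt_dvd (m a : ℕ) (x₁ x₂ : Fin m → Bool) (hx₁ : x₁ ∈ VTcode a m) (hx₂ : x₂ ∈ VTcode a m) :
    ((2 * m + 1 : ℕ) : ℤ) ∣
      (∑ i : Fin m, (((i : ℕ) : ℤ) + 1) * (if x₁ i then 1 else 0)) -
      (∑ i : Fin m, (((i : ℕ) : ℤ) + 1) * (if x₂ i then 1 else 0)) := by
  have h₁ := (Finset.mem_filter.mp hx₁).2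
  have h₂ := (Finset.mem_filter.mp hx₂).2
  have hmod : (∑ i : Fin m, ((i : ℕ) + 1) * (if x₂ i then 1 else 0)) ≡
      (∑ i : Fin m, ((i : ℕ) + 1) * (if x₁ i then 1 else 0)) [MOD 2 * m + 1] := by
    unfold Nat.ModEq
    rw [h₁, h₂]
  have := Nat.modEq_iff_dvd.mp hmod
  push_cast at this ⊢
  convert this using 2

def bint (b : Bool) : ℤ := if b then 1 else 0

lemma bint_nonneg (b : Bool) : 0 ≤ bint b := by cases b <;> simp [bint]
lemma bint_le_one (b : Bool) : bint b ≤ 1 := by cases b <;> simp [bint]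

set_option maxHeartbeats 1000000 in
lemma del_del (m a : ℕ) (hm : 3 ≤ m) (x₁ x₂ : Fin m → Bool)
    (hx₁ : x₁ ∈ VTcode a m) (hx₂ : x₂ ∈ VTcode a m)
    (p₁ p₂ : ℕ) (h₁ : p₁ < m) (h₂ : p₂ < m) (hple : p₁ ≤ p₂)
    (heq : (List.ofFn fun i => some (x₁ i)).eraseIdx p₁ =
           (List.ofFn fun i => some (x₂ i)).eraseIdx p₂) :
    x₁ = x₂ := by
  -- ℕ-indexed bit functions
  set X₁ : ℕ → Bool := fun i => if h : i < m then x₁ ⟨i, h⟩ else false with hX₁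
  set X₂ : ℕ → Bool := fun i => if h : i < m then x₂ ⟨i, h⟩ else false with hX₂
  have hX₁v : ∀ (j : ℕ) (hj : j < m), X₁ j = x₁ ⟨j, hj⟩ := fun j hj => by simp [hX₁, hj]
  have hX₂v : ∀ (j : ℕ) (hj : j < m), X₂ j = x₂ ⟨j, hj⟩ := fun j hj => by simp [hX₂, hj]
  -- pointwise consequences of heq
  have hget : ∀ j, j < m - 1 →
      (if j < p₁ then X₁ j else X₁ (j + 1)) = (if j < p₂ then X₂ j else X₂ (j + 1)) := by
    intro j hj
    have hlen : j < ((List.ofFn fun i => some (x₁ i)).eraseIdx p₁).length := by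
      rw [List.length_eraseIdx]; simp only [List.length_ofFn]; split <;> omega
    have hh := List.getElem_of_eq heq hlen
    rw [getElem_erase_ofFn x₁ p₁ j h₁ hj, getElem_erase_ofFn x₂ p₂ j h₂ hj] at hh
    by_cases hc₁ : j < p₁ <;> by_cases hc₂ : j < p₂ <;>
      simp only [hc₁, hc₂, dif_pos, dif_neg, not_false_iff, if_pos, if_neg, not_lt,
        Option.some.injEq] at hh ⊢ <;>
      first
        | (rw [hX₁v j (by omega), hX₂v j (by omega)]; exact hh)
        | (rw [hX₁v j (by omega), hX₂v (j+1) (by omega)]; exact hh)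
        | (rw [hX₁v (j+1) (by omega), hX₂v j (by omega)]; exact hh)
        | (rw [hX₁v (j+1) (by omega), hX₂v (j+1) (by omega)]; exact hh)
  have f1 : ∀ j, j < p₁ → X₁ j = X₂ j := by
    intro j hjp
    have := hget j (by omega)
    rwa [if_pos hjp, if_pos (by omega)] at this
  have f2 : ∀ j, p₁ ≤ j → j < p₂ → X₁ (j + 1) = X₂ j := by
    intro j hj1 hj2
    have := hget j (by omega)
    rwa [if_neg (by omega), if_pos hj2] at this
  have f3 : ∀ j, p₂ ≤ j → j < m - 1 → X₁ (j + 1) = X₂ (j + 1) := by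
    intro j hj1 hj2
    have := hget j hj2
    rwa [if_neg (by omega), if_neg (by omega)] at this
  -- checksum sums over range m
  set f₁ : ℕ → ℤ := fun i => ((i : ℤ) + 1) * bint (X₁ i) with hf₁
  set f₂ : ℕ → ℤ := fun i => ((i : ℤ) + 1) * bint (X₂ i) with hf₂
  have hsum₁ : (∑ i : Fin m, (((i : ℕ) : ℤ) + 1) * (if x₁ i then 1 else 0)) = ∑ i ∈ Finset.range m, f₁ i := by
    rw [← Fin.sum_univ_eq_sum_range f₁ m]
    refine Finset.sum_congr rfl fun i _ => ?_
    simp [hf₁, bint, hX₁v i i.isLt, Fin.eta]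
  have hsum₂ : (∑ i : Fin m, (((i : ℕ) : ℤ) + 1) * (if x₂ i then 1 else 0)) = ∑ i ∈ Finset.range m, f₂ i := by
    rw [← Fin.sum_univ_eq_sum_range f₂ m]
    refine Finset.sum_congr rfl fun i _ => ?_
    simp [hf₂, bint, hX₂v i i.isLt, Fin.eta]
  have hdvd := vt_dvd m a x₁ x₂ hx₁ hx₂
  rw [hsum₁, hsum₂] at hdvd
  -- decompose the two sums
  set k := p₂ - p₁ with hk
  have e₁ : ∑ i ∈ Finset.range m, f₁ i =
      (∑ i ∈ Finset.Ico 0 p₁, f₁ i) + f₁ p₁ + (∑ i ∈ Finset.Ico (p₁+1) (p₂+1), f₁ i)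
        + ∑ i ∈ Finset.Ico (p₂+1) m, f₁ i := by
    have a1 := Finset.sum_Ico_consecutive f₁ (Nat.zero_le p₁) (le_of_lt h₁)
    have a2 := Finset.sum_Ico_consecutive f₁ (Nat.le_succ p₁) (by omega : p₁ + 1 ≤ m)
    have a3 := Finset.sum_Ico_consecutive f₁ (by omega : p₁ + 1 ≤ p₂ + 1) (by omega : p₂ + 1 ≤ m)
    have a4 : ∑ i ∈ Finset.Ico p₁ (p₁+1), f₁ i = f₁ p₁ := by
      rw [Nat.Ico_succ_singleton, Finset.sum_singleton]
    rw [Finset.range_eq_Ico, ← a1, ← a2, ← a3, a4]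
    ring
  have e₂ : ∑ i ∈ Finset.range m, f₂ i =
      (∑ i ∈ Finset.Ico 0 p₁, f₂ i) + (∑ i ∈ Finset.Ico p₁ p₂, f₂ i) + f₂ p₂
        + ∑ i ∈ Finset.Ico (p₂+1) m, f₂ i := by
    have a1 := Finset.sum_Ico_consecutive f₂ (Nat.zero_le p₁) (by omega : p₁ ≤ m)
    have a2 := Finset.sum_Ico_consecutive f₂ (hple) (by omega : p₂ ≤ m)
    have a3 := Finset.sum_Ico_consecutive f₂ (Nat.le_succ p₂) (by omega : p₂ + 1 ≤ m)
    have a4 : ∑ i ∈ Finset.Ico p₂ (p₂+1), f₂ i = f₂ p₂ := by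
      rw [Nat.Ico_succ_singleton, Finset.sum_singleton]
    rw [Finset.range_eq_Ico, ← a1, ← a2, ← a3, a4]
    ring
  have c1 : ∑ i ∈ Finset.Ico 0 p₁, f₁ i = ∑ i ∈ Finset.Ico 0 p₁, f₂ i := by
    refine Finset.sum_congr rfl fun i hi => ?_
    rw [Finset.mem_Ico] at hi
    rw [hf₁, hf₂]
    simp only [f1 i hi.2]
  have c2 : ∑ i ∈ Finset.Ico (p₂+1) m, f₁ i = ∑ i ∈ Finset.Ico (p₂+1) m, f₂ i := by
    refine Finset.sum_congr rfl fun i hi => ?_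
    rw [Finset.mem_Ico] at hi
    obtain ⟨j, rfl⟩ : ∃ j, i = j + 1 := ⟨i - 1, by omega⟩
    rw [hf₁, hf₂]
    simp only [f3 j (by omega) (by omega)]
  have mid₁ : ∑ i ∈ Finset.Ico (p₁+1) (p₂+1), f₁ i = ∑ i ∈ Finset.range k, f₁ (p₁ + 1 + i) := by
    rw [Finset.sum_Ico_eq_sum_range, show (p₂ + 1) - (p₁ + 1) = k from by omega]
  have mid₂ : ∑ i ∈ Finset.Ico p₁ p₂, f₂ i = ∑ i ∈ Finset.range k, f₂ (p₁ + i) := by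
    rw [Finset.sum_Ico_eq_sum_range, show p₂ - p₁ = k from rfl]
  have midterm : ∀ i ∈ Finset.range k, f₁ (p₁ + 1 + i) = f₂ (p₁ + i) + bint (X₂ (p₁ + i)) := by
    intro i hi
    rw [Finset.mem_range] at hi
    have hx : X₁ (p₁ + i + 1) = X₂ (p₁ + i) := f2 (p₁ + i) (by omega) (by omega)
    rw [hf₁, hf₂]
    simp only [show p₁ + 1 + i = p₁ + i + 1 from by omega, hx]
    push_cast
    ring
  set N := ∑ i ∈ Finset.range k, bint (X₂ (p₁ + i)) with hN
  have hdiff : (∑ i ∈ Finset.range m, f₁ i) - (∑ i ∈ Finset.range m, f₂ i)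
      = f₁ p₁ - f₂ p₂ + N := by
    rw [e₁, e₂, c1, c2, mid₁, mid₂, Finset.sum_congr rfl midterm, Finset.sum_add_distrib]
    ring
  have hN0 : 0 ≤ N := Finset.sum_nonneg fun i _ => bint_nonneg _
  have hNk : N ≤ (k : ℤ) := by
    calc N ≤ ∑ _i ∈ Finset.range k, (1 : ℤ) := Finset.sum_le_sum fun i _ => bint_le_one _
    _ = k := by simp
  -- the checksum difference is 0
  have hzero : f₁ p₁ - f₂ p₂ + N = 0 := by
    refine eq_zero_helper m _ ?_ ?_ (by rw [← hdiff]; exact hdvd)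
    · have := bint_nonneg (X₁ p₁); have := bint_le_one (X₂ p₂)
      have hb : f₂ p₂ ≤ (p₂ : ℤ) + 1 := by
        simp only [hf₂]; nlinarith [bint_le_one (X₂ p₂), bint_nonneg (X₂ p₂)]
      have hb2 : 0 ≤ f₁ p₁ := by
        simp only [hf₁]; nlinarith [bint_nonneg (X₁ p₁), Int.natCast_nonneg p₁]
      have : (p₂ : ℤ) + 1 ≤ m := by exact_mod_cast by omega
      linarith
    · have hb : f₁ p₁ ≤ (p₁ : ℤ) + 1 := by
        simp only [hf₁]; nlinarith [bint_le_one (X₁ p₁), bint_nonneg (X₁ p₁)]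
      have hb2 : 0 ≤ f₂ p₂ := by
        simp only [hf₂]; nlinarith [bint_nonneg (X₂ p₂), Int.natCast_nonneg p₂]
      have h1m : (p₁ : ℤ) + 1 ≤ m := by exact_mod_cast by omega
      have hkm : (k : ℤ) ≤ m := by exact_mod_cast by omega
      linarith
  -- extract the common bit value on the interval
  obtain ⟨v, hA, hB, hMid⟩ : ∃ v : Bool, X₁ p₁ = v ∧ X₂ p₂ = v ∧
      ∀ i ∈ Finset.range k, X₂ (p₁ + i) = v := by
    have hf1nn : 0 ≤ f₁ p₁ := by
      simp only [hf₁]; nlinarith [bint_nonneg (X₁ p₁), Int.natCast_nonneg p₁]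
    cases hb : X₂ p₂ with
    | false =>
      have hf2z : f₂ p₂ = 0 := by simp only [hf₂, hb, bint]; simp
      have hsum0 : f₁ p₁ + N = 0 := by linarith [hzero]
      have hf10 : f₁ p₁ = 0 := by linarith
      have hNz : N = 0 := by linarith
      refine ⟨false, ?_, rfl, ?_⟩
      · cases hc : X₁ p₁ with
        | false => rfl
        | true =>
          exfalso
          have : f₁ p₁ = (p₁ : ℤ) + 1 := by simp only [hf₁, hc, bint]; simp
          have : (0:ℤ) ≤ (p₁ : ℤ) := Int.natCast_nonneg p₁
          linarith
      · have hterms := (Finset.sum_eq_zero_iff_of_nonneg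
          (fun i _ => bint_nonneg (X₂ (p₁ + i)))).mp (by rw [← hN]; exact hNz)
        intro i hi
        have := hterms i hi
        cases hc : X₂ (p₁ + i) with
        | false => rfl
        | true => rw [hc] at this; simp [bint] at this
    | true =>
      have hf2v : f₂ p₂ = (p₂ : ℤ) + 1 := by simp only [hf₂, hb, bint]; simp
      have hsumv : f₁ p₁ + N = (p₂ : ℤ) + 1 := by linarith [hzero]
      have hkz : (k : ℤ) ≤ (p₂ : ℤ) := by exact_mod_cast by omega
      cases hc : X₁ p₁ with
      | false =>
        exfalso
        have : f₁ p₁ = 0 := by simp only [hf₁, hc, bint]; simp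
        linarith
      | true =>
        have hf1v : f₁ p₁ = (p₁ : ℤ) + 1 := by simp only [hf₁, hc, bint]; simp
        have hNv : N = (k : ℤ) := by
          have hpk : (p₁ : ℤ) + (k : ℤ) = (p₂ : ℤ) := by exact_mod_cast by omega
          linarith
        refine ⟨true, rfl, rfl, ?_⟩
        have hsum' : ∑ i ∈ Finset.range k, ((1:ℤ) - bint (X₂ (p₁ + i))) = 0 := by
          rw [Finset.sum_sub_distrib, ← hN]
          simp [hNv]
        have hterms := (Finset.sum_eq_zero_iff_of_nonneg
          (fun i _ => by linarith [bint_le_one (X₂ (p₁ + i))])).mp hsum'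
        intro i hi
        have := hterms i hi
        cases hc2 : X₂ (p₁ + i) with
        | false => rw [hc2] at this; simp [bint] at this
        | true => rfl
  -- conclude x₁ = x₂
  funext i
  have hi : (i : ℕ) < m := i.isLt
  suffices h : X₁ (i : ℕ) = X₂ (i : ℕ) by
    rw [hX₁v _ hi, hX₂v _ hi] at h
    simpa using h
  rcases lt_or_ge (i : ℕ) p₁ with hc | hc
  · exact f1 _ hc
  rcases le_or_gt (i : ℕ) p₂ with hc2 | hc2
  · have h2v : X₂ (i : ℕ) = v := by
      rcases eq_or_lt_of_le hc2 with he | hlt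
      · rw [he]; exact hB
      · have := hMid ((i : ℕ) - p₁) (Finset.mem_range.mpr (by omega))
        rwa [show p₁ + ((i : ℕ) - p₁) = (i : ℕ) from by omega] at this
    have h1v : X₁ (i : ℕ) = v := by
      rcases eq_or_lt_of_le hc with he | hlt
      · rw [← he]; exact hA
      · obtain ⟨j, hj⟩ : ∃ j, (i : ℕ) = j + 1 := ⟨(i : ℕ) - 1, by omega⟩
        rw [hj, f2 j (by omega) (by omega)]
        have := hMid (j - p₁) (Finset.mem_range.mpr (by omega))
        rwa [show p₁ + (j - p₁) = j from by omega] at this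
    rw [h1v, h2v]
  · obtain ⟨j, hj⟩ : ∃ j, (i : ℕ) = j + 1 := ⟨(i : ℕ) - 1, by omega⟩
    rw [hj]
    exact f3 j (by omega) (by omega)

lemma nondel_core (m a : ℕ) (hm : 3 ≤ m) (x₁ x₂ : Fin m → Bool)
    (hx₁ : x₁ ∈ VTcode a m) (hx₂ : x₂ ∈ VTcode a m) (hne : x₁ ≠ x₂)
    (p₁ p₂ : Fin m) (hD : ∀ i, x₁ i ≠ x₂ i → i = p₁ ∨ i = p₂) : False := by
  have hdvd := vt_dvd m a x₁ x₂ hx₁ hx₂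
  have hSc : (∑ i : Fin m, (((i : ℕ) : ℤ) + 1) * (if x₁ i then 1 else 0)) -
      (∑ i : Fin m, (((i : ℕ) : ℤ) + 1) * (if x₂ i then 1 else 0)) =
      ∑ i : Fin m, (((i : ℕ) : ℤ) + 1) * (bint (x₁ i) - bint (x₂ i)) := by
    rw [← Finset.sum_sub_distrib]
    exact Finset.sum_congr rfl fun i _ => by simp only [bint]; ring
  have hsum : (∑ i : Fin m, (((i : ℕ) : ℤ) + 1) * (bint (x₁ i) - bint (x₂ i))) =
      ∑ i ∈ ({p₁, p₂} : Finset (Fin m)), (((i : ℕ) : ℤ) + 1) * (bint (x₁ i) - bint (x₂ i)) := by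
    refine (Finset.sum_subset (Finset.subset_univ _) ?_).symm
    intro i _ hi
    simp only [Finset.mem_insert, Finset.mem_singleton] at hi
    push_neg at hi
    have hxx : x₁ i = x₂ i := by
      by_contra hne'
      rcases hD i hne' with h | h
      · exact hi.1 h
      · exact hi.2 h
    rw [hxx, sub_self, mul_zero]
  obtain ⟨i₀, hi₀⟩ := Function.ne_iff.mp hne
  rw [hSc, hsum] at hdvd
  have hlt₁ : ((p₁ : ℕ) : ℤ) < m := by exact_mod_cast p₁.isLt
  have hlt₂ : ((p₂ : ℕ) : ℤ) < m := by exact_mod_cast p₂.isLt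
  by_cases hpp : p₁ = p₂
  · subst hpp
    rw [show ({p₁, p₁} : Finset (Fin m)) = {p₁} by simp, Finset.sum_singleton] at hdvd
    have hi₀p : i₀ = p₁ := by rcases hD i₀ hi₀ with h | h <;> exact h
    subst hi₀p
    refine not_dvd_helper m _ ?_ ?_ ?_ hdvd <;>
      cases hA : x₁ i₀ <;> cases hB : x₂ i₀ <;>
        simp only [hA, hB, bint, if_true, if_false, Bool.true_eq_false, Bool.false_eq_true,
          ne_eq, not_true_eq_false, not_false_eq_true] at hi₀ ⊢ <;>
      omega
  · rw [Finset.sum_pair hpp] at hdvd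
    have hppv : ((p₁ : ℕ) : ℤ) ≠ ((p₂ : ℕ) : ℤ) := by
      intro h
      exact hpp (Fin.ext (by exact_mod_cast h))
    have hi : x₁ p₁ ≠ x₂ p₁ ∨ x₁ p₂ ≠ x₂ p₂ := by
      rcases hD i₀ hi₀ with h | h
      · left; rw [← h]; exact hi₀
      · right; rw [← h]; exact hi₀
    refine not_dvd_helper m _ ?_ ?_ ?_ hdvd <;>
      cases hA : x₁ p₁ <;> cases hB : x₂ p₁ <;> cases hC : x₁ p₂ <;> cases hE : x₂ p₂ <;>
        simp only [hA, hB, hC, hE, bint, if_true, if_false, Bool.true_eq_false,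
          Bool.false_eq_true, ne_eq, not_true_eq_false, not_false_eq_true,
          or_self, or_true, true_or, or_false, false_or] at hi ⊢ <;>
      omega

lemma unique_pos {m : ℕ} (hm : 0 < m) (g : Pattern m) (hg : g ∈ Epat m 1) :
    ∃ p : Fin m, ∀ i, g.1 i = true → i = p := by
  have hc : (Finset.univ.filter fun i => g.1 i = true).card ≤ 1 := by
    have := (Finset.mem_filter.mp hg).2
    simpa [Epat, errCount] using this
  by_cases hex : ∃ q, g.1 q = true
  · obtain ⟨q, hq⟩ := hex
    refine ⟨q, fun i hi => ?_⟩
    by_contra hni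
    have hsub : ({i, q} : Finset (Fin m)) ⊆ Finset.univ.filter fun i => g.1 i = true := by
      intro z hz
      simp only [Finset.mem_insert, Finset.mem_singleton] at hz
      rcases hz with rfl | rfl <;> simp [hi, hq]
    have hcard := Finset.card_le_card hsub
    rw [Finset.card_pair hni] at hcard
    omega
  · exact ⟨⟨0, hm⟩, fun i hi => absurd ⟨i, hi⟩ hex⟩

/-- The modified VT code `VT_a(m)` corrects a single deletable error. -/
theorem stmt4 (m a : ℕ) (hm : 3 ≤ m) (ha : a ≤ 2 * m)
    (x₁ x₂ : Fin m → Bool) (hx₁ : x₁ ∈ VTcode a m) (hx₂ : x₂ ∈ VTcode a m) (hne : x₁ ≠ x₂)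
    (g₁ g₂ : Pattern m) (hg₁ : g₁ ∈ Epat m 1) (hg₂ : g₂ ∈ Epat m 1) :
    corrupt g₁ x₁ ≠ corrupt g₂ x₂ := by
  intro hEq
  have hm0 : 0 < m := by omega
  obtain ⟨p₁, hu₁⟩ := unique_pos hm0 g₁ hg₁
  obtain ⟨p₂, hu₂⟩ := unique_pos hm0 g₂ hg₂
  have hlen_del : ∀ (g : Pattern m) (x : Word m) (p : Fin m),
      ((List.ofFn fun i => some (x i)).eraseIdx (p : ℕ)).length = m - 1 := by
    intro g x p
    rw [List.length_eraseIdx]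
    simp only [List.length_ofFn]
    have := p.isLt
    split <;> omega
  by_cases hd₁ : g₁.1 p₁ = true ∧ g₁.2 p₁ = ErrKind.D <;>
    by_cases hd₂ : g₂.1 p₂ = true ∧ g₂.2 p₂ = ErrKind.D
  · -- both patterns delete
    rw [corrupt_del g₁ x₁ p₁ hd₁.1 hd₁.2 hu₁, corrupt_del g₂ x₂ p₂ hd₂.1 hd₂.2 hu₂] at hEq
    rcases le_total ((p₁ : ℕ)) ((p₂ : ℕ)) with hle | hle
    · exact hne (del_del m a hm x₁ x₂ hx₁ hx₂ _ _ p₁.isLt p₂.isLt hle hEq)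
    · exact hne (del_del m a hm x₂ x₁ hx₂ hx₁ _ _ p₂.isLt p₁.isLt hle hEq.symm).symm
  · -- g₁ deletes, g₂ does not: length mismatch
    have hnoD₂ : ∀ i, g₂.1 i = true → g₂.2 i ≠ ErrKind.D := by
      intro i hi h2
      have hip := hu₂ i hi
      subst hip
      exact hd₂ ⟨hi, h2⟩
    rw [corrupt_del g₁ x₁ p₁ hd₁.1 hd₁.2 hu₁, corrupt_noD g₂ x₂ hnoD₂] at hEq
    have hlen := congrArg List.length hEq
    rw [hlen_del g₁ x₁ p₁] at hlen
    simp only [List.length_ofFn] at hlen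
    omega
  · -- g₂ deletes, g₁ does not: length mismatch
    have hnoD₁ : ∀ i, g₁.1 i = true → g₁.2 i ≠ ErrKind.D := by
      intro i hi h2
      have hip := hu₁ i hi
      subst hip
      exact hd₁ ⟨hi, h2⟩
    rw [corrupt_noD g₁ x₁ hnoD₁, corrupt_del g₂ x₂ p₂ hd₂.1 hd₂.2 hu₂] at hEq
    have hlen := congrArg List.length hEq
    rw [hlen_del g₂ x₂ p₂] at hlen
    simp only [List.length_ofFn] at hlen
    omega
  · -- neither deletes
    have hnoD₁ : ∀ i, g₁.1 i = true → g₁.2 i ≠ ErrKind.D := by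
      intro i hi h2
      have hip := hu₁ i hi
      subst hip
      exact hd₁ ⟨hi, h2⟩
    have hnoD₂ : ∀ i, g₂.1 i = true → g₂.2 i ≠ ErrKind.D := by
      intro i hi h2
      have hip := hu₂ i hi
      subst hip
      exact hd₂ ⟨hi, h2⟩
    rw [corrupt_noD g₁ x₁ hnoD₁, corrupt_noD g₂ x₂ hnoD₂] at hEq
    have hfun := List.ofFn_inj.mp hEq
    refine nondel_core m a hm x₁ x₂ hx₁ hx₂ hne p₁ p₂ ?_
    intro i hni
    by_contra hcon
    push_neg at hcon
    have h1f : g₁.1 i = false := by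
      cases hgi : g₁.1 i
      · rfl
      · exact absurd (hu₁ i hgi) hcon.1
    have h2f : g₂.1 i = false := by
      cases hgi : g₂.1 i
      · rfl
      · exact absurd (hu₂ i hgi) hcon.2
    have hthis := congrFun hfun i
    simp only [outFn, h1f, h2f, Bool.false_eq_true, if_false, Option.some.injEq] at hthis
    exact hni hthis
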